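/- Let A be a finite commutative unital ring, let (a,b,x) ∈ A³ and let n ≥ 3 be an integer. If the n-tuple (a, x, x, …, x, b) ∈ A^n (whose first entry is a, whose last entry is b, and whose n−2 middle entries all equal x) is a λ-quiddity over A, then a = b and a·(a − x) = 0. -/
import Mathlib


namespace Quiddity

variable {A : Type*} [CommRing A]

/-- `mMat [a₁, …, aₙ]` is the matrix product `[[aₙ,-1],[1,0]] ⋯ [[a₁,-1],[1,0]]`. -/
def mMat : List A → Matrix (Fin 2) (Fin 2) A
  | [] => 1
  | a :: t => mMat t * !![a, -1; 1, 0]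

/-- Continuant: `cont [] = K₀ = 1`, `cont [a] = K₁(a) = a`, and the continuant recursion. -/
def cont : List A → A
  | [] => 1
  | [a] => a
  | a :: b :: t => a * cont (b :: t) - cont t

/-- A λ-quiddity is a tuple with `Mₙ(a₁,…,aₙ) = ± Id`. -/
def IsQuiddity (l : List A) : Prop := mMat l = 1 ∨ mMat l = -1

/-- The sum `⊕` of two tuples (meaningful for tuples of length ≥ 2):
`(a₁,…,aₘ) ⊕ (b₁,…,b_l) = (a₁+b_l, a₂,…,a_{m−1}, aₘ+b₁, b₂,…,b_{l−1})`. -/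
def oplus (la lb : List A) : List A :=
  (la.headD 0 + lb.getLastD 0) ::
    (la.tail.dropLast ++ (la.getLastD 0 + lb.headD 0) :: lb.tail.dropLast)

/-- Two tuples are equivalent if one is a cyclic permutation of the other or of its
reversal. -/
def TupleEquiv (l l' : List A) : Prop :=
  List.IsRotated l l' ∨ List.IsRotated l.reverse l'

/-- A λ-quiddity `c` is reducible if `c ∼ a ⊕ b` with `b` a λ-quiddity and both of size ≥ 3. -/
def QuiddityReducible (c : List A) : Prop :=
  ∃ a b : List A, 3 ≤ a.length ∧ 3 ≤ b.length ∧ IsQuiddity b ∧ TupleEquiv c (oplus a b)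

/-- `(a, b, a, b, …, a, b)` with `k` repetitions of the pair `(a, b)` (size `2k`). -/
def dynList : ℕ → A → A → List A
  | 0, _, _ => []
  | k + 1, a, b => a :: b :: dynList k a b

/-- `(u, v, v, u, v, v, …, u, v, v)` with `k` repetitions of the block `(u, v, v)`
(size `3k`). -/
def triList : ℕ → A → A → List A
  | 0, _, _ => []
  | k + 1, a, b => a :: b :: b :: triList k a b

end Quiddity

open Quiddity

section Aux

variable {A : Type*} [CommRing A]

lemma mMat_append (l₁ l₂ : List A) : mMat (l₁ ++ l₂) = mMat l₂ * mMat l₁ := by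
  induction l₁ with
  | nil => simp [mMat]
  | cons c t ih => simp [mMat, ih, mul_assoc]

lemma mMat_replicate (x : A) (m : ℕ) :
    mMat (List.replicate m x) = (!![x, -1; 1, 0] : Matrix (Fin 2) (Fin 2) A) ^ m := by
  induction m with
  | zero => simp [mMat]
  | succ k ih =>
    rw [List.replicate_succ', mMat_append, ih, pow_succ']
    simp only [mMat, one_mul]

lemma pow_struct (x : A) (m : ℕ) : ∃ p q t : A,
    (!![x, -1; 1, 0] : Matrix (Fin 2) (Fin 2) A) ^ m = !![p, -q; q, t] ∧ x * q = p - t := by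
  induction m with
  | zero => exact ⟨1, 0, 1, by rw [pow_zero, Matrix.one_fin_two, neg_zero], by ring⟩
  | succ k ih =>
    obtain ⟨p, q, t, hM, hL⟩ := ih
    refine ⟨p * x - q, p, -q, ?_, ?_⟩
    · rw [pow_succ, hM, Matrix.mul_fin_two]
      have hqt : q * x + t * 1 = p := by
        have : x * q = p - t := hL
        linear_combination this
      rw [hqt]
      congr 1 <;> ring
    · ring

end Aux

/-- if `(a, x, …, x, b)` (with `n − 2` middle entries equal to `x`, `n ≥ 3`)
is a λ-quiddity over a finite commutative ring, then `a = b` and `a·(a − x) = 0`. -/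
theorem stmt5 (A : Type*) [CommRing A] [Fintype A] (a b x : A) (n : ℕ) (hn : 3 ≤ n)
    (h : IsQuiddity (a :: (List.replicate (n - 2) x ++ [b]))) :
    a = b ∧ a * (a - x) = 0 := by
  obtain ⟨p, q, t, hM, hL⟩ := pow_struct x (n - 2)
  have hrw : mMat (a :: (List.replicate (n - 2) x ++ [b]))
      = !![b, -1; 1, 0] * !![p, -q; q, t] * !![a, -1; 1, 0] := by
    show mMat (List.replicate (n - 2) x ++ [b]) * !![a, -1; 1, 0] = _
    rw [mMat_append, mMat_replicate, hM]
    simp [mMat]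
  rcases h with h | h <;>
    rw [hrw, Matrix.mul_fin_two, Matrix.mul_fin_two] at h <;>
    simp only [← Matrix.ext_iff, Fin.forall_fin_two] at h
  case inl =>
    simp at h
    obtain ⟨⟨h00, h01⟩, h10, h11⟩ := h
    have hp2 : p * p = 1 := by linear_combination (1 - p) * h11
    refine ⟨?_, ?_⟩
    · linear_combination p * h10 + p * h01 + (b - a) * hp2
    · linear_combination (p * (a - x) + p * b) * h10 - p * h00 + p * h11 - p * hL +
        (a * x - a * a) * hp2
  case inr =>
    simp at h
    obtain ⟨⟨h00, h01⟩, h10, h11⟩ := h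
    have hp2 : p * p = 1 := by linear_combination (1 + p) * h11
    refine ⟨?_, ?_⟩
    · linear_combination p * h10 + p * h01 + (b - a) * hp2
    · linear_combination (p * (a - x) + p * b) * h10 - p * h00 - p * h11 - p * hL +
        (a * x - a * a) * hp2
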